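/- Let T_n be a uniformly random ternary tree with 3n+1 nodes and let u be a uniformly random internal node of T_n. Then the size |T_u| of the fringe subtree rooted at u converges in distribution as n → ∞ to a random variable K with P(K = 3k+1) = (2^{2k+1} / (3^{3k}(3k+1))) · C(3k+1, k) for k ≥ 1. -/

import Mathlib

/-- Plane trees: a node carries the (ordered) list of its subtrees. -/
inductive PlaneTree : Type
  | node : List PlaneTree → PlaneTree

namespace PlaneTree

/-- Total number of nodes of a plane tree. -/
def size : PlaneTree → ℕ
  | node ts => 1 + (ts.attach.map (fun x => size x.1)).sum
decreasing_by
  have := List.sizeOf_lt_of_mem x.2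
  simp only [PlaneTree.node.sizeOf_spec]
  omega

/-- A ternary tree is a plane tree in which every node has 0 or 3 children. -/
inductive IsTernary : PlaneTree → Prop
  | leaf : IsTernary (node [])
  | node3 (a b c : PlaneTree) : IsTernary a → IsTernary b → IsTernary c →
      IsTernary (node [a, b, c])

/-- Number of internal nodes (nodes with at least one child). -/
def numInternal : PlaneTree → ℕ
  | node ts => (if ts.length = 0 then 0 else 1) + (ts.attach.map (fun x => numInternal x.1)).sum
decreasing_by
  have := List.sizeOf_lt_of_mem x.2
  simp only [PlaneTree.node.sizeOf_spec]
  omega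

/-- Number of leaves (nodes with no child). -/
def numLeaves : PlaneTree → ℕ
  | node ts => (if ts.length = 0 then 1 else 0) + (ts.attach.map (fun x => numLeaves x.1)).sum
decreasing_by
  have := List.sizeOf_lt_of_mem x.2
  simp only [PlaneTree.node.sizeOf_spec]
  omega

/-- The list of root subtrees. -/
def children : PlaneTree → List PlaneTree
  | node ts => ts

/-- The fringe subtree of a tree at the node addressed by a word (sequence of child
indices), if it exists. -/
def subtreeAt : List ℕ → PlaneTree → Option PlaneTree
  | [], t => some t
  | i :: rest, t => (t.children[i]?).bind (subtreeAt rest)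

-- computation lemmas
@[simp] lemma size_nil : size (node []) = 1 := by rw [size]; simp

@[simp] lemma size_three (a b c : PlaneTree) :
    size (node [a, b, c]) = 1 + (size a + size b + size c) := by
  rw [size]; simp [List.attach, List.attachWith]; ring

@[simp] lemma numInternal_nil : numInternal (node []) = 0 := by rw [numInternal]; simp

@[simp] lemma numInternal_three (a b c : PlaneTree) :
    numInternal (node [a, b, c]) = 1 + (numInternal a + numInternal b + numInternal c) := by
  rw [numInternal]; simp [List.attach, List.attachWith]; ring

@[simp] lemma numLeaves_nil : numLeaves (node []) = 1 := by rw [numLeaves]; simp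

@[simp] lemma numLeaves_three (a b c : PlaneTree) :
    numLeaves (node [a, b, c]) = numLeaves a + numLeaves b + numLeaves c := by
  rw [numLeaves]; simp [List.attach, List.attachWith]; ring

lemma size_eq_of_ternary {T : PlaneTree} (h : IsTernary T) :
    size T = 3 * numInternal T + 1 := by
  induction h with
  | leaf => simp
  | node3 a b c _ _ _ iha ihb ihc => simp [iha, ihb, ihc]; ring

lemma numLeaves_eq_of_ternary {T : PlaneTree} (h : IsTernary T) :
    numLeaves T = 2 * numInternal T + 1 := by
  induction h with
  | leaf => simp
  | node3 a b c _ _ _ iha ihb ihc => simp [iha, ihb, ihc]; ring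

@[simp] lemma children_node (ts : List PlaneTree) : children (node ts) = ts := rfl

@[simp] lemma subtreeAt_nil (t : PlaneTree) : subtreeAt [] t = some t := rfl

lemma subtreeAt_cons (i : ℕ) (r : List ℕ) (ts : List PlaneTree) :
    subtreeAt (i :: r) (node ts) = (ts[i]?).bind (subtreeAt r) := rfl

lemma isTernary_subtreeAt {T S : PlaneTree} {a : List ℕ} (h : IsTernary T)
    (hs : subtreeAt a T = some S) : IsTernary S := by
  induction a generalizing T with
  | nil => simp at hs; rwa [← hs]
  | cons i r ih =>
    cases h with
    | leaf => simp [subtreeAt_cons] at hs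
    | node3 x y z hx hy hz =>
      rw [subtreeAt_cons] at hs
      rcases i with _ | _ | _ | i
      · exact ih hx (by simpa using hs)
      · exact ih hy (by simpa using hs)
      · exact ih hz (by simpa using hs)
      · simp at hs

lemma nodup_flatMap' {α β : Type*} {l : List α} {f : α → List β} (hl : l.Nodup)
    (hf : ∀ a ∈ l, (f a).Nodup)
    (hinj : ∀ a ∈ l, ∀ a' ∈ l, ∀ b, b ∈ f a → b ∈ f a' → a = a') :
    (l.flatMap f).Nodup := by
  rw [List.nodup_flatMap]
  refine ⟨hf, ?_⟩
  refine hl.imp_of_mem ?_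
  intro a b ha hb hne
  intro x hx hx'
  exact absurd (hinj a ha b hb x hx hx') hne

def tern : ℕ → List PlaneTree
  | 0 => [node []]
  | (n+1) =>
    (List.range (n+1)).attach.flatMap (fun a =>
      (List.range (n+1-a.1)).attach.flatMap (fun b =>
        (tern a.1).flatMap (fun x => (tern b.1).flatMap (fun y =>
          (tern (n - a.1 - b.1)).map (fun z => node [x,y,z])))))
decreasing_by
  · have := List.mem_range.1 a.2; omega
  · have := List.mem_range.1 b.2; omega
  · have := List.mem_range.1 a.2; omega

lemma mem_tern : ∀ (n : ℕ) (S : PlaneTree), S ∈ tern n ↔ IsTernary S ∧ numInternal S = n := by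
  intro n
  induction n using Nat.strong_induction_on with
  | _ n ih =>
    intro S
    match n with
    | 0 =>
      rw [tern]
      constructor
      · rintro h; simp at h; subst h; exact ⟨IsTernary.leaf, by simp⟩
      · rintro ⟨ht, hn⟩
        cases ht with
        | leaf => simp
        | node3 a b c => simp at hn
    | (m+1) =>
      rw [tern]
      simp only [List.mem_flatMap, List.mem_map, List.mem_attach, true_and, Subtype.exists,
        List.mem_range]
      constructor
      · rintro ⟨a, ha, b, hb, x, hx, y, hy, z, hz, rfl⟩
        have hxm := (ih a (by omega) x).1 hx
        have hym := (ih b (by omega) y).1 hy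
        have hzm := (ih (m - a - b) (by omega) z).1 hz
        refine ⟨IsTernary.node3 _ _ _ hxm.1 hym.1 hzm.1, ?_⟩
        simp [hxm.2, hym.2, hzm.2]; omega
      · rintro ⟨ht, hn⟩
        cases ht with
        | leaf => simp at hn
        | node3 x y z hx hy hz =>
          simp only [numInternal_three] at hn
          refine ⟨numInternal x, by omega, numInternal y, by omega, x,
            (ih _ (by omega) x).2 ⟨hx, rfl⟩, y, (ih _ (by omega) y).2 ⟨hy, rfl⟩, z,
            (ih _ (by omega) z).2 ⟨hz, ?_⟩, rfl⟩
          omega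

lemma nodup_tern : ∀ n : ℕ, (tern n).Nodup := by
  intro n
  induction n using Nat.strong_induction_on with
  | _ n ih =>
    match n with
    | 0 => rw [tern]; simp
    | (m+1) =>
      rw [tern]
      apply nodup_flatMap'
      · exact List.nodup_attach.2 List.nodup_range
      · intro a _
        apply nodup_flatMap'
        · exact List.nodup_attach.2 List.nodup_range
        · intro b _
          apply nodup_flatMap'
          · have := List.mem_range.1 a.2; exact ih _ (by omega)
          · intro x _
            apply nodup_flatMap'
            · have := List.mem_range.1 a.2
              have := List.mem_range.1 b.2; exact ih _ (by omega)
            · intro y _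
              refine List.Nodup.map ?_ (ih _ (by omega))
              intro z z' h
              have h' : z = z' := by simpa using h
              exact h'
            · intro y hy y' hy' w hw hw'
              simp only [List.mem_map] at hw hw'
              obtain ⟨z, _, rfl⟩ := hw
              obtain ⟨z', _, h⟩ := hw'
              have h' : y' = y ∧ z' = z := by simpa using h
              exact h'.1.symm
          · intro x hx x' hx' w hw hw'
            simp only [List.mem_flatMap, List.mem_map] at hw hw'
            obtain ⟨y, _, z, _, rfl⟩ := hw
            obtain ⟨y', _, z', _, h⟩ := hw'
            have h' : x' = x ∧ y' = y ∧ z' = z := by simpa using h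
            exact h'.1.symm
        · intro b hb b' hb' w hw hw'
          simp only [List.mem_flatMap, List.mem_map] at hw hw'
          obtain ⟨x, hx, y, hy, z, hz, rfl⟩ := hw
          obtain ⟨x', hx', y', hy', z', hz', h⟩ := hw'
          have e1 : y' = y := by
            have h' : x' = x ∧ y' = y ∧ z' = z := by simpa using h
            exact h'.2.1
          subst e1
          have m1 := (mem_tern _ _).1 hy
          have m2 := (mem_tern _ _).1 hy'
          exact Subtype.ext (m1.2.symm.trans m2.2)
      · intro a ha a' ha' w hw hw'
        simp only [List.mem_flatMap, List.mem_map] at hw hw'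
        obtain ⟨b, hb, x, hx, y, hy, z, hz, rfl⟩ := hw
        obtain ⟨b', hb', x', hx', y', hy', z', hz', h⟩ := hw'
        have e1 : x' = x := by
          have h' : x' = x ∧ y' = y ∧ z' = z := by simpa using h
          exact h'.1
        subst e1
        have m1 := (mem_tern _ _).1 hx
        have m2 := (mem_tern _ _).1 hx'
        exact Subtype.ext (m1.2.symm.trans m2.2)

end PlaneTree

open Filter

section Words

def wsum (w : List Bool) : ℤ := 2 * (w.count true : ℤ) - (w.count false : ℤ)

@[simp] lemma wsum_nil : wsum [] = 0 := by simp [wsum]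

@[simp] lemma wsum_append (a b : List Bool) : wsum (a ++ b) = wsum a + wsum b := by
  simp [wsum]; ring

@[simp] lemma wsum_cons (x : Bool) (w : List Bool) :
    wsum (x :: w) = (if x then 2 else -1) + wsum w := by
  cases x <;> simp [wsum] <;> ring

def Valid (w : List Bool) : Prop :=
  (∀ p, p <+: w → p ≠ w → 0 ≤ wsum p) ∧ wsum w = -1

lemma Valid.ne_nil {w : List Bool} (h : Valid w) : w ≠ [] := by
  intro hw; rw [hw] at h; simpa using h.2

lemma valid_prefix_eq {u v : List Bool} (hu : Valid u) (hv : Valid v) (h : u <+: v) :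
    u = v := by
  by_contra hne
  have := hv.1 u h hne
  have := hu.2
  omega

lemma prefix_append_cases {α : Type*} {p x y : List α} (h : p <+: x ++ y) :
    p <+: x ∨ ∃ q, q <+: y ∧ p = x ++ q := by
  have hp := List.prefix_iff_eq_take.1 h
  rcases le_or_gt p.length x.length with hle | hlt
  · left
    rw [List.take_append, Nat.sub_eq_zero_of_le hle, List.take_zero,
      List.append_nil] at hp
    exact hp ▸ List.take_prefix _ _
  · right
    refine ⟨y.take (p.length - x.length), List.take_prefix _ _, ?_⟩
    rwa [List.take_append, List.take_of_length_le (by omega)] at hp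

lemma wsum_prefix_ge {v p : List Bool} (hv : Valid v) (hp : p <+: v) : -1 ≤ wsum p := by
  by_cases h : p = v
  · rw [h, hv.2]
  · have := hv.1 p hp h; omega

/-- The first-passage decomposition: any word with weight sum `≤ -1` has a valid
prefix. -/
lemma exists_valid_prefix {u : List Bool} (h : wsum u ≤ -1) :
    ∃ a r, u = a ++ r ∧ Valid a ∧ wsum r = wsum u + 1 := by
  classical
  have hex : ∃ m, wsum (u.take m) ≤ -1 := ⟨u.length, by rwa [List.take_length]⟩
  obtain ⟨m, hspec, hmin⟩ : ∃ m, wsum (u.take m) ≤ -1 ∧ ∀ j < m, ¬ wsum (u.take j) ≤ -1 :=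
    ⟨Nat.find hex, Nat.find_spec hex, fun j hj => Nat.find_min hex hj⟩
  have hm0 : m ≠ 0 := by
    intro h0; rw [h0] at hspec; simp at hspec
  have hml : m ≤ u.length := by
    by_contra hc
    exact hmin u.length (by omega) (by rwa [List.take_length])
  have hstep : ∀ j, wsum (u.take j) - 1 ≤ wsum (u.take (j+1)) := by
    intro j
    rw [List.take_succ]
    rcases h' : u[j]? with _ | x
    · simp
    · simp only [Option.toList_some, wsum_append, wsum_cons, wsum_nil]
      cases x <;> simp <;> omega
  have hlast : wsum (u.take m) = -1 := by
    obtain ⟨m', rfl⟩ : ∃ m', m = m' + 1 := ⟨m - 1, by omega⟩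
    have h1 := hstep m'
    have h2 := hmin m' (by omega)
    omega
  refine ⟨u.take m, u.drop m, (List.take_append_drop m u).symm, ⟨?_, hlast⟩, ?_⟩
  · intro p hp hne
    have hple : p.length ≤ m := by
      have := hp.length_le
      simpa [List.length_take] using (le_trans this (by simp [List.length_take]))
    have hpeq : p = u.take p.length := by
      have := List.prefix_iff_eq_take.1 hp
      rwa [List.take_take, min_eq_left hple] at this
    have hplt : p.length < m := by
      rcases lt_or_eq_of_le hple with h' | h'
      · exact h'
      · exfalso; apply hne; rw [hpeq, h']
    have := hmin p.length hplt
    rw [← hpeq] at this; omega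
  · have : wsum u = wsum (u.take m) + wsum (u.drop m) := by
      conv_lhs => rw [← List.take_append_drop m u]
      rw [wsum_append]
    omega

end Words
section Encode
open PlaneTree

def encode : PlaneTree → List Bool
  | .node [] => [false]
  | .node [a, b, c] => true :: (encode a ++ encode b ++ encode c)
  | .node _ => [false]

@[simp] lemma encode_leaf : encode (.node []) = [false] := rfl

@[simp] lemma encode_node3 (a b c : PlaneTree) :
    encode (.node [a, b, c]) = true :: (encode a ++ encode b ++ encode c) := rfl

lemma count_true_encode {T : PlaneTree} (h : IsTernary T) :
    (encode T).count true = numInternal T := by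
  induction h with
  | leaf => simp
  | node3 a b c _ _ _ iha ihb ihc =>
    simp [List.count_cons, List.count_append, iha, ihb, ihc]; ring

lemma count_false_encode {T : PlaneTree} (h : IsTernary T) :
    (encode T).count false = numLeaves T := by
  induction h with
  | leaf => simp
  | node3 a b c _ _ _ iha ihb ihc =>
    simp [List.count_cons, List.count_append, iha, ihb, ihc]; ring

lemma count_true_add_count_false (w : List Bool) :
    w.count true + w.count false = w.length := by
  induction w with
  | nil => simp
  | cons x w ih => cases x <;> simp [List.count_cons] <;> omega

lemma length_encode {T : PlaneTree} (h : IsTernary T) :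
    (encode T).length = size T := by
  rw [← count_true_add_count_false, count_true_encode h, count_false_encode h,
    numLeaves_eq_of_ternary h, size_eq_of_ternary h]
  ring

lemma wsum_encode {T : PlaneTree} (h : IsTernary T) : wsum (encode T) = -1 := by
  rw [wsum, count_true_encode h, count_false_encode h, numLeaves_eq_of_ternary h]
  push_cast; ring

lemma wsum_prefix_of_append3 {A B C q : List Bool} (hA : Valid A) (hB : Valid B)
    (hC : Valid C) (hq : q <+: A ++ B ++ C) (hne : q ≠ A ++ B ++ C) :
    -2 ≤ wsum q := by
  rcases prefix_append_cases hq with hab | ⟨q', hq', rfl⟩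
  · rcases prefix_append_cases hab with ha | ⟨q'', hq'', rfl⟩
    · have := wsum_prefix_ge hA ha; omega
    · have := wsum_prefix_ge hB hq''
      rw [wsum_append, hA.2]; omega
  · have hne' : q' ≠ C := by
      intro he; exact hne (by rw [he])
    have := hC.1 q' hq' hne'
    rw [wsum_append, wsum_append, hA.2, hB.2]; omega

lemma encode_valid {T : PlaneTree} (h : IsTernary T) : Valid (encode T) := by
  induction h with
  | leaf =>
    refine ⟨?_, by simp [wsum]⟩
    intro p hp hne
    cases p with
    | nil => simp
    | cons x t =>
      exfalso
      rcases hp with ⟨r, hr⟩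
      rw [List.cons_append] at hr
      injection hr with h1 h2
      rcases List.append_eq_nil_iff.1 h2 with ⟨rfl, rfl⟩
      exact hne (by rw [h1, encode_leaf])
  | node3 a b c ha hb hc iha ihb ihc =>
    have hwa := wsum_encode ha
    have hwb := wsum_encode hb
    have hwc := wsum_encode hc
    refine ⟨?_, by simp only [encode_node3, wsum_cons, wsum_append, hwa, hwb, hwc, if_true]; ring⟩
    intro p hp hne
    rw [encode_node3] at hp hne
    rcases hp with ⟨r, hr⟩
    match p, hr with
    | [], _ => simp
    | true :: q, hr =>
      have hq : q <+: encode a ++ encode b ++ encode c := ⟨r, by simpa using hr⟩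
      have hqne : q ≠ encode a ++ encode b ++ encode c := fun he => hne (by rw [he])
      have hbound := wsum_prefix_of_append3 iha ihb ihc hq hqne
      simp only [wsum_cons, if_true]
      omega
    | false :: q, hr => simp at hr

lemma valid_append_eq {u v r s : List Bool} (hu : Valid u) (hv : Valid v)
    (h : u ++ r = v ++ s) : u = v := by
  rcases List.prefix_or_prefix_of_prefix (⟨r, rfl⟩ : u <+: u ++ r)
    (⟨s, h.symm⟩ : v <+: u ++ r) with h' | h'
  · exact valid_prefix_eq hu hv h'
  · exact (valid_prefix_eq hv hu h').symm

lemma encode_injective {S T : PlaneTree} (hS : IsTernary S) (hT : IsTernary T)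
    (h : encode S = encode T) : S = T := by
  induction hS generalizing T with
  | leaf =>
    cases hT with
    | leaf => rfl
    | node3 a b c => simp at h
  | node3 a b c ha hb hc iha ihb ihc =>
    cases hT with
    | leaf => simp at h
    | node3 a' b' c' ha' hb' hc' =>
      simp only [encode_node3, List.cons.injEq, true_and] at h
      rw [List.append_assoc, List.append_assoc] at h
      have e1 : encode a = encode a' :=
        valid_append_eq (encode_valid ha) (encode_valid ha') h
      rw [e1] at h
      have h2 := List.append_cancel_left h
      have e2 : encode b = encode b' :=
        valid_append_eq (encode_valid hb) (encode_valid hb') h2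
      rw [e2] at h2
      have e3 := List.append_cancel_left h2
      rw [iha ha' e1, ihb hb' e2, ihc hc' e3]

lemma exists_encode {w : List Bool} (hv : Valid w) :
    ∃ T, IsTernary T ∧ encode T = w := by
  have H : ∀ L (w : List Bool), w.length = L → Valid w → ∃ T, IsTernary T ∧ encode T = w := by
    intro L
    induction L using Nat.strong_induction_on with
    | _ L ih =>
    intro w hw hv
    subst hw
    match w, hv with
    | [], hv => exact absurd rfl hv.ne_nil
    | false :: rest, hv =>
      have : rest = [] := by
        by_contra hne
        have hp : [false] <+: false :: rest := ⟨rest, rfl⟩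
        have hne' : [false] ≠ false :: rest := by
          intro he; injection he with _ h2; exact hne h2.symm
        have := hv.1 [false] hp hne'
        simp [wsum] at this
      subst this
      exact ⟨.node [], IsTernary.leaf, rfl⟩
    | true :: rest, hv =>
      have hwrest : wsum rest = -3 := by
        have := hv.2; simp only [wsum_cons, if_true] at this; omega
      obtain ⟨A, r1, rfl, hA, hr1⟩ := exists_valid_prefix (u := rest) (by omega)
      rw [hwrest] at hr1
      obtain ⟨B, r2, rfl, hB, hr2⟩ := exists_valid_prefix (u := r1) (by omega)
      rw [hr1] at hr2
      obtain ⟨C, r3, rfl, hC, hr3⟩ := exists_valid_prefix (u := r2) (by omega)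
      rw [hr2] at hr3
      have hr3nil : r3 = [] := by
        by_contra hne
        have hp : true :: (A ++ B ++ C) <+: true :: (A ++ (B ++ (C ++ r3))) :=
          ⟨r3, by simp⟩
        have hne' : true :: (A ++ B ++ C) ≠ true :: (A ++ (B ++ (C ++ r3))) := by
          intro he
          have hlen2 := congrArg List.length he
          simp only [List.length_cons, List.length_append] at hlen2
          exact hne (List.eq_nil_of_length_eq_zero (by omega))
        have := hv.1 _ hp hne'
        simp only [wsum_cons, wsum_append, hA.2, hB.2, hC.2, if_true] at this
        omega
      subst hr3nil
      have hAne : A ≠ [] := hA.ne_nil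
      have hlen : ∀ u : List Bool, Valid u → u ≠ [] → 0 < u.length := by
        intro u _ hu
        cases u with
        | nil => exact absurd rfl hu
        | cons x t => simp
      obtain ⟨TA, hTA, hEA⟩ := ih A.length (by
        simp [List.length_append]) A rfl hA
      obtain ⟨TB, hTB, hEB⟩ := ih B.length (by
        simp [List.length_append]
        have := hlen A hA hA.ne_nil
        have := hlen B hB hB.ne_nil
        omega) B rfl hB
      obtain ⟨TC, hTC, hEC⟩ := ih C.length (by
        simp [List.length_append]
        have := hlen A hA hA.ne_nil
        have := hlen B hB hB.ne_nil
        omega) C rfl hC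
      refine ⟨.node [TA, TB, TC], IsTernary.node3 _ _ _ hTA hTB hTC, ?_⟩
      rw [encode_node3, hEA, hEB, hEC]
      simp
  exact H _ w rfl hv
end Encode
section Rotate

lemma wsum_rotate (w : List Bool) (n : ℕ) : wsum (w.rotate n) = wsum w := by
  have h := List.rotate_perm w n
  simp [wsum, h.count_eq]

lemma valid_rotate_eq_zero {v : List Bool} (hv : Valid v) {r : ℕ} (hr : r < v.length)
    (h : Valid (v.rotate r)) : r = 0 := by
  by_contra hr0
  have hrle : r ≤ v.length := le_of_lt hr
  have hrot : v.rotate r = v.drop r ++ v.take r := List.rotate_eq_drop_append_take hrle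
  have hp : v.drop r <+: v.rotate r := by rw [hrot]; exact ⟨_, rfl⟩
  have hne : v.drop r ≠ v.rotate r := by
    intro he
    have := congrArg List.length he
    rw [List.length_rotate, List.length_drop] at this
    omega
  have h0 := h.1 _ hp hne
  have hsplit : wsum v = wsum (v.take r) + wsum (v.drop r) := by
    conv_lhs => rw [← List.take_append_drop r v]
    rw [wsum_append]
  have htp : 0 ≤ wsum (v.take r) := by
    apply hv.1
    · exact List.take_prefix _ _
    · intro he
      have := congrArg List.length he
      rw [List.length_take] at this
      omega
  have := hv.2
  omega

lemma valid_rotate_inj {v : List Bool} (hv : Valid v) {i j : ℕ} (hi : i < v.length)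
    (hj : j < v.length) (h : v.rotate i = v.rotate j) : i = j := by
  have hL : 0 < v.length := by omega
  have h1 : v.rotate (i + (v.length - j)) = v := by
    have h2 : (v.rotate j).rotate (v.length - j) = v := by
      rw [List.rotate_rotate, show j + (v.length - j) = v.length by omega,
        List.rotate_length]
    rw [← List.rotate_rotate, h, h2]
  have h2 : v.rotate ((i + (v.length - j)) % v.length) = v := by
    rw [List.rotate_mod]; exact h1
  have hr0 := valid_rotate_eq_zero hv (Nat.mod_lt _ hL) (h2 ▸ hv)
  have hdvd : v.length ∣ (i + (v.length - j)) := Nat.dvd_of_mod_eq_zero hr0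
  obtain ⟨c, hc⟩ := hdvd
  rcases Nat.lt_or_ge c 2 with hc2 | hc2
  · interval_cases c <;> omega
  · have : v.length * 2 ≤ v.length * c := Nat.mul_le_mul_left _ hc2
    omega

lemma valid_rotate_eq {u v : List Bool} (hu : Valid u) (hv : Valid v)
    (hlen : u.length = v.length) {i j : ℕ} (hi : i < u.length) (hj : j < u.length)
    (h : u.rotate i = v.rotate j) : u = v := by
  have hL : 0 < u.length := by omega
  have h1 : u.rotate (i + (u.length - j)) = v := by
    have h2 : (v.rotate j).rotate (u.length - j) = v := by
      rw [List.rotate_rotate, show j + (u.length - j) = v.length by omega,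
        List.rotate_length]
    rw [← List.rotate_rotate, h, h2]
  have h2 : u.rotate ((i + (u.length - j)) % u.length) = v := by
    rw [List.rotate_mod]; exact h1
  have hr0 := valid_rotate_eq_zero hu (Nat.mod_lt _ hL) (h2 ▸ hv)
  rw [hr0] at h2
  rw [← h2, List.rotate_zero]

lemma exists_valid_rotate {w : List Bool} (h : wsum w = -1) :
    ∃ i < w.length, Valid (w.rotate i) := by
  classical
  have hw0 : w ≠ [] := by intro he; rw [he] at h; simp at h
  have hL : 0 < w.length := List.length_pos_iff.2 hw0
  have hex : ∃ i, i ≤ w.length ∧ ∀ j ≤ w.length, wsum (w.take i) ≤ wsum (w.take j) := by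
    obtain ⟨i, hi, hmin⟩ := Finset.exists_min_image (Finset.range (w.length + 1))
      (fun j => wsum (w.take j)) ⟨0, by simp⟩
    refine ⟨i, by simpa using Nat.lt_succ_iff.1 (Finset.mem_range.1 hi), fun j hj =>
      hmin j (Finset.mem_range.2 (by omega))⟩
  obtain ⟨i, ⟨hiL, hmin⟩, hleast⟩ :
      ∃ i, (i ≤ w.length ∧ ∀ j ≤ w.length, wsum (w.take i) ≤ wsum (w.take j)) ∧
        ∀ i' < i, ¬(i' ≤ w.length ∧ ∀ j ≤ w.length, wsum (w.take i') ≤ wsum (w.take j)) :=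
    ⟨Nat.find hex, Nat.find_spec hex, fun i' hi' => Nat.find_min hex hi'⟩
  have hneg : wsum (w.take i) ≤ -1 := by
    have := hmin w.length le_rfl
    rwa [List.take_length, h] at this
  have hstrict : ∀ t < i, wsum (w.take i) + 1 ≤ wsum (w.take t) := by
    intro t ht
    have h1 := hmin t (by omega)
    rcases lt_or_eq_of_le h1 with h2 | h2
    · omega
    · exfalso
      exact hleast t ht ⟨by omega, fun j hj => h2 ▸ hmin j hj⟩
  rcases lt_or_eq_of_le hiL with hilt | hieq
  · refine ⟨i, hilt, ?_, by rw [wsum_rotate]; exact h⟩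
    intro p hp hne
    rw [List.rotate_eq_drop_append_take (le_of_lt hilt)] at hp hne
    rcases prefix_append_cases hp with hpd | ⟨q, hq, rfl⟩
    · have hpt : p = (w.drop i).take p.length := List.prefix_iff_eq_take.1 hpd
      have hplen : p.length ≤ w.length - i := by
        have := hpd.length_le; rwa [List.length_drop] at this
      have hw1 : w.take (i + p.length) = w.take i ++ p := by
        rw [List.take_add, ← hpt]
      have := hmin (i + p.length) (by omega)
      have hws : wsum (w.take (i + p.length)) = wsum (w.take i) + wsum p := by
        rw [hw1, wsum_append]
      omega
    · have hqlen : q.length ≤ i := by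
        have := hq.length_le; rwa [List.length_take, min_eq_left hiL] at this
      have hqt : q = w.take q.length := by
        have := List.prefix_iff_eq_take.1 hq
        rwa [List.take_take, min_eq_left hqlen] at this
      have hqlt : q.length < i := by
        rcases lt_or_eq_of_le hqlen with h' | h'
        · exact h'
        · exact absurd (by rw [hqt, h']) hne
      have hdw : wsum (w.drop i) = wsum w - wsum (w.take i) := by
        have : wsum w = wsum (w.take i) + wsum (w.drop i) := by
          conv_lhs => rw [← List.take_append_drop i w]
          rw [wsum_append]
        omega
      have hst := hstrict q.length hqlt
      rw [← hqt] at hst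
      rw [wsum_append, hdw, h]
      omega
  · subst hieq
    refine ⟨0, hL, ?_, by rw [List.rotate_zero]; exact h⟩
    rw [List.rotate_zero]
    intro p hp hne
    have hpt : p = w.take p.length := List.prefix_iff_eq_take.1 hp
    have hplen : p.length ≤ w.length := hp.length_le
    have hplt : p.length < w.length := by
      rcases lt_or_eq_of_le hplen with h' | h'
      · exact h'
      · exfalso; apply hne; rw [hpt, h', List.take_length]
    have := hstrict p.length hplt
    rw [← hpt, List.take_length, h] at this
    omega

end Rotate
section WordsList

def words : ℕ → ℕ → List (List Bool)
  | 0, 0 => [[]]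
  | a+1, 0 => (words a 0).map (true :: ·)
  | 0, b+1 => (words 0 b).map (false :: ·)
  | a+1, b+1 => (words a (b+1)).map (true :: ·) ++ (words (a+1) b).map (false :: ·)

lemma sum_map_const {α : Type*} (l : List α) (c : ℕ) :
    (l.map (fun _ => c)).sum = l.length * c := by
  induction l with
  | nil => simp
  | cons x t ih => simp [ih]; ring

lemma length_words : ∀ a b, (words a b).length = (a + b).choose a := by
  have H : ∀ n a b, a + b = n → (words a b).length = (a + b).choose a := by
    intro n
    induction n with
    | zero =>
      intro a b h
      obtain ⟨rfl, rfl⟩ : a = 0 ∧ b = 0 := by omega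
      rw [words.eq_def]; simp
    | succ n ih =>
      intro a b h
      match a, b with
      | 0, b+1 => rw [words]; simp [ih 0 b (by omega)]
      | a+1, 0 => rw [words]; simp [ih a 0 (by omega)]
      | a+1, b+1 =>
        rw [words]
        rw [List.length_append, List.length_map, List.length_map,
          ih a (b+1) (by omega), ih (a+1) b (by omega)]
        have e1 : a + (b + 1) = a + b + 1 := by ring
        have e3 : a + 1 + b = a + b + 1 := by ring
        have e2 : a + 1 + (b + 1) = a + b + 1 + 1 := by ring
        rw [e1, e3, e2]
        exact (Nat.choose_succ_succ _ _).symm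
  intro a b; exact H (a+b) a b rfl

lemma mem_words : ∀ a b (w : List Bool),
    w ∈ words a b ↔ w.count true = a ∧ w.count false = b := by
  have H : ∀ n a b, a + b = n → ∀ w : List Bool,
      w ∈ words a b ↔ w.count true = a ∧ w.count false = b := by
    intro n
    induction n with
    | zero =>
      intro a b h w
      obtain ⟨rfl, rfl⟩ : a = 0 ∧ b = 0 := by omega
      rw [words.eq_def]
      simp only [List.mem_singleton]
      constructor
      · rintro rfl; simp
      · rintro ⟨h1, h2⟩
        cases w with
        | nil => rfl
        | cons x t =>
          exfalso
          cases x
          · simp [List.count_cons] at h2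
          · simp [List.count_cons] at h1
    | succ n ih =>
      intro a b h w
      match a, b with
      | 0, b+1 =>
        rw [words]
        simp only [List.mem_map]
        constructor
        · rintro ⟨v, hv, rfl⟩
          have := (ih 0 b (by omega) v).1 hv
          simp [List.count_cons, this.1, this.2]
        · rintro ⟨h1, h2⟩
          cases w with
          | nil => simp at h2
          | cons x t =>
            cases x
            · refine ⟨t, (ih 0 b (by omega) t).2 ⟨?_, ?_⟩, rfl⟩ <;>
                simp [List.count_cons] at h1 h2 <;> omega
            · simp [List.count_cons] at h1
      | a+1, 0 =>
        rw [words]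
        simp only [List.mem_map]
        constructor
        · rintro ⟨v, hv, rfl⟩
          have := (ih a 0 (by omega) v).1 hv
          simp [List.count_cons, this.1, this.2]
        · rintro ⟨h1, h2⟩
          cases w with
          | nil => simp at h1
          | cons x t =>
            cases x
            · simp [List.count_cons] at h2
            · refine ⟨t, (ih a 0 (by omega) t).2 ⟨?_, ?_⟩, rfl⟩ <;>
                simp [List.count_cons] at h1 h2 <;> omega
      | a+1, b+1 =>
        rw [words]
        simp only [List.mem_append, List.mem_map]
        constructor
        · rintro (⟨v, hv, rfl⟩ | ⟨v, hv, rfl⟩)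
          · have := (ih a (b+1) (by omega) v).1 hv
            simp [List.count_cons, this.1, this.2]
          · have := (ih (a+1) b (by omega) v).1 hv
            simp [List.count_cons, this.1, this.2]
        · rintro ⟨h1, h2⟩
          cases w with
          | nil => simp at h1
          | cons x t =>
            cases x
            · right
              refine ⟨t, (ih (a+1) b (by omega) t).2 ⟨?_, ?_⟩, rfl⟩ <;>
                simp [List.count_cons] at h1 h2 <;> omega
            · left
              refine ⟨t, (ih a (b+1) (by omega) t).2 ⟨?_, ?_⟩, rfl⟩ <;>
                simp [List.count_cons] at h1 h2 <;> omega
  intro a b w; exact H (a+b) a b rfl w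

lemma nodup_words : ∀ a b, (words a b).Nodup := by
  have H : ∀ n a b, a + b = n → (words a b).Nodup := by
    intro n
    induction n with
    | zero =>
      intro a b h
      obtain ⟨rfl, rfl⟩ : a = 0 ∧ b = 0 := by omega
      rw [words.eq_def]; simp
    | succ n ih =>
      intro a b h
      match a, b with
      | 0, b+1 =>
        rw [words]
        exact (ih 0 b (by omega)).map (fun x y hxy => by injection hxy)
      | a+1, 0 =>
        rw [words]
        exact (ih a 0 (by omega)).map (fun x y hxy => by injection hxy)
      | a+1, b+1 =>
        rw [words]
        refine List.Nodup.append ?_ ?_ ?_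
        · exact (ih a (b+1) (by omega)).map (fun x y hxy => by injection hxy)
        · exact (ih (a+1) b (by omega)).map (fun x y hxy => by injection hxy)
        · intro x hx hy
          simp only [List.mem_map] at hx hy
          obtain ⟨v, _, rfl⟩ := hx
          obtain ⟨v', _, he⟩ := hy
          simp at he
  intro a b; exact H (a+b) a b rfl

end WordsList
section TernCount
open PlaneTree

lemma length_encode_mem {n : ℕ} {T : PlaneTree} (hT : T ∈ tern n) :
    (encode T).length = 3 * n + 1 := by
  obtain ⟨h1, h2⟩ := (mem_tern n T).1 hT
  rw [length_encode h1, size_eq_of_ternary h1, h2]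

def RL (n : ℕ) : List (List Bool) :=
  (tern n).flatMap (fun T => (List.range (3*n+1)).map (fun i => (encode T).rotate i))

lemma length_RL (n : ℕ) : (RL n).length = (tern n).length * (3*n+1) := by
  rw [RL, List.length_flatMap]
  have : (List.map (List.length ∘ fun T => (List.range (3*n+1)).map
      (fun i => (encode T).rotate i)) (tern n)) = (tern n).map (fun _ => 3*n+1) := by
    apply List.map_congr_left
    intro T _
    simp
  simp only [Function.comp_def] at this
  rw [this, sum_map_const]

lemma nodup_RL (n : ℕ) : (RL n).Nodup := by
  apply nodup_flatMap' (nodup_tern n)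
  · intro T hT
    apply List.Nodup.map_on ?_ List.nodup_range
    intro i hi j hj hij
    have hl := length_encode_mem hT
    exact valid_rotate_inj (encode_valid ((mem_tern n T).1 hT).1)
      (by rw [hl]; exact List.mem_range.1 hi) (by rw [hl]; exact List.mem_range.1 hj) hij
  · intro T hT T' hT' w hw hw'
    simp only [List.mem_map, List.mem_range] at hw hw'
    obtain ⟨i, hi, rfl⟩ := hw
    obtain ⟨j, hj, he⟩ := hw'
    have hl := length_encode_mem hT
    have hl' := length_encode_mem hT'
    have := valid_rotate_eq (encode_valid ((mem_tern n T).1 hT).1)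
      (encode_valid ((mem_tern n T').1 hT').1) (by rw [hl, hl'])
      (by omega) (by rw [hl]; omega) he.symm
    exact encode_injective ((mem_tern n T).1 hT).1 ((mem_tern n T').1 hT').1 this

lemma mem_RL (n : ℕ) (w : List Bool) : w ∈ RL n ↔ w ∈ words n (2*n+1) := by
  rw [RL, mem_words]
  simp only [List.mem_flatMap, List.mem_map, List.mem_range]
  constructor
  · rintro ⟨T, hT, i, hi, rfl⟩
    obtain ⟨h1, h2⟩ := (mem_tern n T).1 hT
    have hperm := List.rotate_perm (encode T) i
    rw [hperm.count_eq, hperm.count_eq, count_true_encode h1, count_false_encode h1,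
      numLeaves_eq_of_ternary h1, h2]
    exact ⟨rfl, rfl⟩
  · rintro ⟨h1, h2⟩
    have hww : wsum w = -1 := by rw [wsum, h1, h2]; push_cast; ring
    have hL : w.length = 3*n+1 := by
      rw [← count_true_add_count_false w, h1, h2]; ring
    obtain ⟨i, hi, hvr⟩ := exists_valid_rotate hww
    obtain ⟨T, hT, hE⟩ := exists_encode hvr
    have hTn : T ∈ tern n := by
      apply (mem_tern n T).2
      refine ⟨hT, ?_⟩
      have := count_true_encode hT
      rw [hE, (List.rotate_perm w i).count_eq, h1] at this
      omega
    refine ⟨T, hTn, (w.length - i) % w.length, ?_, ?_⟩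
    · have : 0 < w.length := by omega
      rw [← hL]
      exact Nat.mod_lt _ this
    · have hEL : (encode T).length = w.length := by rw [length_encode_mem hTn, hL]
      have : (encode T).rotate ((w.length - i) % w.length) =
          (encode T).rotate (w.length - i) := by
        rw [← hEL, List.rotate_mod]
      rw [this, hE, List.rotate_rotate, show i + (w.length - i) = w.length by omega,
        List.rotate_length]

theorem tern_count (n : ℕ) : (tern n).length * (3*n+1) = (3*n+1).choose n := by
  have hperm : List.Perm (RL n) (words n (2*n+1)) :=
    (List.perm_ext_iff_of_nodup (nodup_RL n) (nodup_words n (2*n+1))).2 (mem_RL n)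
  have := hperm.length_eq
  rw [length_RL, length_words] at this
  rw [this]
  congr 1
  ring

end TernCount
section Addresses
open PlaneTree

@[simp] lemma subtreeAt_zero (r : List ℕ) (x y z : PlaneTree) :
    subtreeAt (0 :: r) (.node [x,y,z]) = subtreeAt r x := rfl
@[simp] lemma subtreeAt_one (r : List ℕ) (x y z : PlaneTree) :
    subtreeAt (1 :: r) (.node [x,y,z]) = subtreeAt r y := rfl
@[simp] lemma subtreeAt_two (r : List ℕ) (x y z : PlaneTree) :
    subtreeAt (2 :: r) (.node [x,y,z]) = subtreeAt r z := rfl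
@[simp] lemma subtreeAt_big (i : ℕ) (r : List ℕ) (x y z : PlaneTree) :
    subtreeAt ((i+3) :: r) (.node [x,y,z]) = none := rfl
@[simp] lemma subtreeAt_leaf (i : ℕ) (r : List ℕ) :
    subtreeAt (i :: r) (.node []) = none := by
  rw [subtreeAt]; cases i <;> rfl

def intAddrs : PlaneTree → List (List ℕ)
  | .node [] => []
  | .node [a,b,c] => [] :: ((intAddrs a).map (0 :: ·) ++ (intAddrs b).map (1 :: ·)
      ++ (intAddrs c).map (2 :: ·))
  | .node _ => []

def leafAddrs : PlaneTree → List (List ℕ)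
  | .node [] => [[]]
  | .node [a,b,c] => (leafAddrs a).map (0 :: ·) ++ (leafAddrs b).map (1 :: ·)
      ++ (leafAddrs c).map (2 :: ·)
  | .node _ => []

lemma mem_intAddrs {T : PlaneTree} (hT : IsTernary T) (a : List ℕ) :
    a ∈ intAddrs T ↔ ∃ ts, subtreeAt a T = some (.node ts) ∧ ts ≠ [] := by
  induction hT generalizing a with
  | leaf =>
    rw [intAddrs]
    simp only [List.not_mem_nil, false_iff]
    rintro ⟨ts, hts, hne⟩
    cases a with
    | nil => simp at hts; exact hne hts
    | cons i r => simp at hts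
  | node3 x y z hx hy hz ihx ihy ihz =>
    rw [intAddrs]
    simp only [List.mem_cons, List.mem_append, List.mem_map]
    constructor
    · rintro (rfl | ((⟨b, hb, rfl⟩ | ⟨b, hb, rfl⟩) | ⟨b, hb, rfl⟩))
      · exact ⟨[x,y,z], by simp, by simp⟩
      · obtain ⟨ts, h1, h2⟩ := (ihx b).1 hb; exact ⟨ts, by simpa using h1, h2⟩
      · obtain ⟨ts, h1, h2⟩ := (ihy b).1 hb; exact ⟨ts, by simpa using h1, h2⟩
      · obtain ⟨ts, h1, h2⟩ := (ihz b).1 hb; exact ⟨ts, by simpa using h1, h2⟩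
    · rintro ⟨ts, hts, hne⟩
      cases a with
      | nil => exact Or.inl rfl
      | cons i r =>
        right
        rcases i with _ | _ | _ | i
        · exact Or.inl (Or.inl ⟨r, (ihx r).2 ⟨ts, by simpa using hts, hne⟩, rfl⟩)
        · exact Or.inl (Or.inr ⟨r, (ihy r).2 ⟨ts, by simpa using hts, hne⟩, rfl⟩)
        · exact Or.inr ⟨r, (ihz r).2 ⟨ts, by simpa using hts, hne⟩, rfl⟩
        · simp at hts

lemma mem_leafAddrs {T : PlaneTree} (hT : IsTernary T) (a : List ℕ) :
    a ∈ leafAddrs T ↔ subtreeAt a T = some (.node []) := by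
  induction hT generalizing a with
  | leaf =>
    rw [leafAddrs]
    simp only [List.mem_singleton]
    constructor
    · rintro rfl; simp
    · intro h
      cases a with
      | nil => rfl
      | cons i r => simp at h
  | node3 x y z hx hy hz ihx ihy ihz =>
    rw [leafAddrs]
    simp only [List.mem_append, List.mem_map]
    constructor
    · rintro ((⟨b, hb, rfl⟩ | ⟨b, hb, rfl⟩) | ⟨b, hb, rfl⟩)
      · simpa using (ihx b).1 hb
      · simpa using (ihy b).1 hb
      · simpa using (ihz b).1 hb
    · intro hts
      cases a with
      | nil =>
        exfalso; simp at hts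
      | cons i r =>
        rcases i with _ | _ | _ | i
        · exact Or.inl (Or.inl ⟨r, (ihx r).2 (by simpa using hts), rfl⟩)
        · exact Or.inl (Or.inr ⟨r, (ihy r).2 (by simpa using hts), rfl⟩)
        · exact Or.inr ⟨r, (ihz r).2 (by simpa using hts), rfl⟩
        · simp at hts

lemma length_intAddrs {T : PlaneTree} (hT : IsTernary T) :
    (intAddrs T).length = numInternal T := by
  induction hT with
  | leaf => rw [intAddrs]; simp
  | node3 x y z hx hy hz ihx ihy ihz =>
    rw [intAddrs]; simp [ihx, ihy, ihz]; ring

lemma length_leafAddrs {T : PlaneTree} (hT : IsTernary T) :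
    (leafAddrs T).length = numLeaves T := by
  induction hT with
  | leaf => rw [leafAddrs]; simp
  | node3 x y z hx hy hz ihx ihy ihz =>
    rw [leafAddrs]; simp [ihx, ihy, ihz]; ring

lemma nodup_cons_map_append3 {l1 l2 l3 : List (List ℕ)} (h1 : l1.Nodup) (h2 : l2.Nodup)
    (h3 : l3.Nodup) :
    (l1.map (0 :: ·) ++ l2.map (1 :: ·) ++ l3.map (2 :: ·)).Nodup := by
  have inj : ∀ i : ℕ, ∀ x y : List ℕ, i :: x = i :: y → x = y := by
    intro i x y h; injection h
  refine List.Nodup.append (List.Nodup.append (h1.map (inj 0)) (h2.map (inj 1)) ?_)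
    (h3.map (inj 2)) ?_
  · intro w hw hw'
    simp only [List.mem_map] at hw hw'
    obtain ⟨b, _, rfl⟩ := hw
    obtain ⟨b', _, he⟩ := hw'
    simp at he
  · intro w hw hw'
    simp only [List.mem_append, List.mem_map] at hw hw'
    obtain ⟨b', _, he⟩ := hw'
    rcases hw with ⟨b, _, rfl⟩ | ⟨b, _, rfl⟩ <;> simp at he

lemma nodup_intAddrs {T : PlaneTree} (hT : IsTernary T) : (intAddrs T).Nodup := by
  induction hT with
  | leaf => rw [intAddrs]; simp
  | node3 x y z hx hy hz ihx ihy ihz =>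
    rw [intAddrs]
    refine List.Nodup.cons ?_ (nodup_cons_map_append3 ihx ihy ihz)
    intro hmem
    simp only [List.mem_append, List.mem_map] at hmem
    rcases hmem with (⟨b, _, he⟩ | ⟨b, _, he⟩) | ⟨b, _, he⟩ <;> simp at he

lemma nodup_leafAddrs {T : PlaneTree} (hT : IsTernary T) : (leafAddrs T).Nodup := by
  induction hT with
  | leaf => rw [leafAddrs]; simp
  | node3 x y z hx hy hz ihx ihy ihz =>
    rw [leafAddrs]
    exact nodup_cons_map_append3 ihx ihy ihz

def graft : List ℕ → PlaneTree → PlaneTree → PlaneTree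
  | [], _, S => S
  | i :: r, .node ts, S => .node (ts.set i (graft r (ts.getD i (.node [])) S))

@[simp] lemma graft_nil (T S : PlaneTree) : graft [] T S = S := rfl
@[simp] lemma graft_zero (r : List ℕ) (x y z S : PlaneTree) :
    graft (0 :: r) (.node [x,y,z]) S = .node [graft r x S, y, z] := rfl
@[simp] lemma graft_one (r : List ℕ) (x y z S : PlaneTree) :
    graft (1 :: r) (.node [x,y,z]) S = .node [x, graft r y S, z] := rfl
@[simp] lemma graft_two (r : List ℕ) (x y z S : PlaneTree) :
    graft (2 :: r) (.node [x,y,z]) S = .node [x, y, graft r z S] := rfl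

lemma subtreeAt_graft {T X : PlaneTree} {a : List ℕ} (hT : IsTernary T)
    (h : subtreeAt a T = some X) (S : PlaneTree) :
    subtreeAt a (graft a T S) = some S := by
  induction a generalizing T X with
  | nil => simp
  | cons i r ih =>
    cases hT with
    | leaf => simp at h
    | node3 x y z hx hy hz =>
      have hi : i = 0 ∨ i = 1 ∨ i = 2 ∨ 3 ≤ i := by omega
      rcases hi with rfl | rfl | rfl | hge
      · rw [subtreeAt_zero] at h
        rw [graft_zero, subtreeAt_zero]
        exact ih hx h
      · rw [subtreeAt_one] at h
        rw [graft_one, subtreeAt_one]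
        exact ih hy h
      · rw [subtreeAt_two] at h
        rw [graft_two, subtreeAt_two]
        exact ih hz h
      · obtain ⟨j, rfl⟩ : ∃ j, i = j + 3 := ⟨i - 3, by omega⟩
        rw [subtreeAt_big] at h
        exact absurd h (by simp)

lemma graft_graft {T X : PlaneTree} {a : List ℕ} (hT : IsTernary T)
    (h : subtreeAt a T = some X) (S : PlaneTree) :
    graft a (graft a T S) X = T := by
  induction a generalizing T X with
  | nil =>
    simp only [subtreeAt_nil, Option.some.injEq] at h
    subst h
    simp
  | cons i r ih =>
    cases hT with
    | leaf => simp at h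
    | node3 x y z hx hy hz =>
      have hi : i = 0 ∨ i = 1 ∨ i = 2 ∨ 3 ≤ i := by omega
      rcases hi with rfl | rfl | rfl | hge
      · rw [subtreeAt_zero] at h
        rw [graft_zero, graft_zero, ih hx h]
      · rw [subtreeAt_one] at h
        rw [graft_one, graft_one, ih hy h]
      · rw [subtreeAt_two] at h
        rw [graft_two, graft_two, ih hz h]
      · obtain ⟨j, rfl⟩ : ∃ j, i = j + 3 := ⟨i - 3, by omega⟩
        rw [subtreeAt_big] at h
        exact absurd h (by simp)

lemma isTernary_graft {T X : PlaneTree} {a : List ℕ} (hT : IsTernary T)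
    (h : subtreeAt a T = some X) {S : PlaneTree} (hS : IsTernary S) :
    IsTernary (graft a T S) := by
  induction a generalizing T X with
  | nil => simpa using hS
  | cons i r ih =>
    cases hT with
    | leaf => simp at h
    | node3 x y z hx hy hz =>
      have hi : i = 0 ∨ i = 1 ∨ i = 2 ∨ 3 ≤ i := by omega
      rcases hi with rfl | rfl | rfl | hge
      · rw [subtreeAt_zero] at h
        rw [graft_zero]
        exact IsTernary.node3 _ _ _ (ih hx h) hy hz
      · rw [subtreeAt_one] at h
        rw [graft_one]
        exact IsTernary.node3 _ _ _ hx (ih hy h) hz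
      · rw [subtreeAt_two] at h
        rw [graft_two]
        exact IsTernary.node3 _ _ _ hx hy (ih hz h)
      · obtain ⟨j, rfl⟩ : ∃ j, i = j + 3 := ⟨i - 3, by omega⟩
        rw [subtreeAt_big] at h
        exact absurd h (by simp)

lemma numInternal_graft {T X : PlaneTree} {a : List ℕ} (hT : IsTernary T)
    (h : subtreeAt a T = some X) (S : PlaneTree) :
    numInternal (graft a T S) + numInternal X = numInternal T + numInternal S := by
  induction a generalizing T X with
  | nil =>
    simp only [subtreeAt_nil, Option.some.injEq] at h
    subst h
    rw [graft_nil]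
    ring
  | cons i r ih =>
    cases hT with
    | leaf => simp at h
    | node3 x y z hx hy hz =>
      have hi : i = 0 ∨ i = 1 ∨ i = 2 ∨ 3 ≤ i := by omega
      rcases hi with rfl | rfl | rfl | hge
      · rw [subtreeAt_zero] at h
        rw [graft_zero]
        have := ih hx h
        simp only [numInternal_three]
        omega
      · rw [subtreeAt_one] at h
        rw [graft_one]
        have := ih hy h
        simp only [numInternal_three]
        omega
      · rw [subtreeAt_two] at h
        rw [graft_two]
        have := ih hz h
        simp only [numInternal_three]
        omega
      · obtain ⟨j, rfl⟩ : ∃ j, i = j + 3 := ⟨i - 3, by omega⟩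
        rw [subtreeAt_big] at h
        exact absurd h (by simp)

end Addresses
section PairLists
open PlaneTree

def DL (n : ℕ) : List (PlaneTree × List ℕ) :=
  (tern n).flatMap (fun T => (intAddrs T).map (fun a => (T, a)))

lemma mem_DL (n : ℕ) (p : PlaneTree × List ℕ) :
    p ∈ DL n ↔ IsTernary p.1 ∧ numInternal p.1 = n ∧
      ∃ ts, subtreeAt p.2 p.1 = some (.node ts) ∧ ts ≠ [] := by
  rw [DL]
  simp only [List.mem_flatMap, List.mem_map]
  constructor
  · rintro ⟨T, hT, a, ha, rfl⟩
    obtain ⟨h1, h2⟩ := (mem_tern n T).1 hT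
    exact ⟨h1, h2, (mem_intAddrs h1 a).1 ha⟩
  · rintro ⟨h1, h2, h3⟩
    exact ⟨p.1, (mem_tern n p.1).2 ⟨h1, h2⟩, p.2, (mem_intAddrs h1 p.2).2 h3, rfl⟩

lemma nodup_DL (n : ℕ) : (DL n).Nodup := by
  apply nodup_flatMap' (nodup_tern n)
  · intro T hT
    exact (nodup_intAddrs ((mem_tern n T).1 hT).1).map (fun a b hab => by simpa using hab)
  · intro T _ T' _ w hw hw'
    simp only [List.mem_map] at hw hw'
    obtain ⟨a, _, rfl⟩ := hw
    obtain ⟨a', _, he⟩ := hw'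
    exact (congrArg Prod.fst he).symm

lemma length_DL (n : ℕ) : (DL n).length = (tern n).length * n := by
  rw [DL, List.length_flatMap]
  have h1 : List.map (List.length ∘ fun T => (intAddrs T).map (fun a => (T, a))) (tern n)
      = (tern n).map (fun _ => n) := by
    apply List.map_congr_left
    intro T hT
    obtain ⟨ht, hn⟩ := (mem_tern n T).1 hT
    simp [List.length_map, length_intAddrs ht, hn]
  simp only [Function.comp_def] at h1
  rw [h1, sum_map_const]

def NL (m k : ℕ) : List (PlaneTree × List ℕ) :=
  (tern m).flatMap (fun C => (leafAddrs C).flatMap (fun a =>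
    (tern k).map (fun S => (graft a C S, a))))

lemma mem_NL (m k : ℕ) (p : PlaneTree × List ℕ) :
    p ∈ NL m k ↔ IsTernary p.1 ∧ numInternal p.1 = m + k ∧
      ∃ S, subtreeAt p.2 p.1 = some S ∧ numInternal S = k := by
  rw [NL]
  simp only [List.mem_flatMap, List.mem_map]
  constructor
  · rintro ⟨C, hC, a, ha, S, hS, rfl⟩
    obtain ⟨hC1, hC2⟩ := (mem_tern m C).1 hC
    obtain ⟨hS1, hS2⟩ := (mem_tern k S).1 hS
    have hX : subtreeAt a C = some (.node []) := (mem_leafAddrs hC1 a).1 ha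
    refine ⟨isTernary_graft hC1 hX hS1, ?_, S, subtreeAt_graft hC1 hX S, hS2⟩
    have := numInternal_graft hC1 hX S
    simp only [numInternal_nil] at this
    show numInternal (graft a C S) = m + k
    omega
  · rintro ⟨h1, h2, S, hS, hSk⟩
    have hStern := isTernary_subtreeAt h1 hS
    have hCt : IsTernary (graft p.2 p.1 (.node [])) := isTernary_graft h1 hS IsTernary.leaf
    have hXC : subtreeAt p.2 (graft p.2 p.1 (.node [])) = some (.node []) :=
      subtreeAt_graft h1 hS _
    have hCm : numInternal (graft p.2 p.1 (.node [])) = m := by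
      have := numInternal_graft h1 hS (.node [])
      simp only [numInternal_nil] at this
      omega
    refine ⟨graft p.2 p.1 (.node []), (mem_tern m _).2 ⟨hCt, hCm⟩, p.2,
      (mem_leafAddrs hCt p.2).2 hXC, S, (mem_tern k S).2 ⟨hStern, hSk⟩, ?_⟩
    have := graft_graft h1 hS (.node [])
    rw [this]

lemma nodup_NL (m k : ℕ) : (NL m k).Nodup := by
  apply nodup_flatMap' (nodup_tern m)
  · intro C hC
    have hC1 := ((mem_tern m C).1 hC).1
    apply nodup_flatMap' (nodup_leafAddrs hC1)
    · intro a ha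
      apply (nodup_tern k).map
      intro S S' hSS
      have hX : subtreeAt a C = some (.node []) := (mem_leafAddrs hC1 a).1 ha
      have e1 := subtreeAt_graft hC1 hX S
      have e2 := subtreeAt_graft hC1 hX S'
      have hfst : graft a C S = graft a C S' := by simpa using congrArg Prod.fst hSS
      rw [hfst] at e1
      rw [e1] at e2
      exact Option.some.inj e2
    · intro a _ a' _ w hw hw'
      simp only [List.mem_map] at hw hw'
      obtain ⟨S, _, rfl⟩ := hw
      obtain ⟨S', _, he⟩ := hw'
      exact (by simpa using congrArg Prod.snd he : a' = a).symm
  · intro C hC C' hC' w hw hw'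
    simp only [List.mem_flatMap, List.mem_map] at hw hw'
    obtain ⟨a, ha, S, hSm, rfl⟩ := hw
    obtain ⟨a', ha', S', hSm', he⟩ := hw'
    have hC1 := ((mem_tern m C).1 hC).1
    have hC1' := ((mem_tern m C').1 hC').1
    have hX : subtreeAt a C = some (.node []) := (mem_leafAddrs hC1 a).1 ha
    have hX' : subtreeAt a' C' = some (.node []) := (mem_leafAddrs hC1' a').1 ha'
    have haa : a' = a := by simpa using congrArg Prod.snd he
    have hgg : graft a C' S' = graft a C S := by
      have h' := congrArg Prod.fst he
      simpa [haa] using h'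
    rw [haa] at hX'
    have e1 := subtreeAt_graft hC1 hX S
    have e2 := subtreeAt_graft hC1' hX' S'
    rw [hgg] at e2
    rw [e1] at e2
    have hSS : S' = S := (Option.some.inj e2).symm
    have r1 := graft_graft hC1 hX S
    have r2 := graft_graft hC1' hX' S'
    rw [hgg] at r2
    rw [r1] at r2
    exact r2

lemma length_NL (m k : ℕ) :
    (NL m k).length = (tern m).length * ((2*m+1) * (tern k).length) := by
  rw [NL, List.length_flatMap]
  have h1 : List.map (List.length ∘ fun C => (leafAddrs C).flatMap (fun a =>
      (tern k).map (fun S => (graft a C S, a)))) (tern m)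
      = (tern m).map (fun _ => (2*m+1) * (tern k).length) := by
    apply List.map_congr_left
    intro C hC
    obtain ⟨hC1, hC2⟩ := (mem_tern m C).1 hC
    simp only [Function.comp_apply, List.length_flatMap]
    have h2 : List.map (List.length ∘ fun a => (tern k).map (fun S => (graft a C S, a)))
        (leafAddrs C) = (leafAddrs C).map (fun _ => (tern k).length) := by
      apply List.map_congr_left
      intro a _
      simp
    simp only [Function.comp_def] at h2
    rw [h2, sum_map_const, length_leafAddrs hC1, numLeaves_eq_of_ternary hC1, hC2]
  simp only [Function.comp_def] at h1
  rw [h1, sum_map_const]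

lemma nat_card_eq_length {α : Type*} (l : List α) (hl : l.Nodup) (P : α → Prop)
    (h : ∀ x, P x ↔ x ∈ l) : Nat.card {x // P x} = l.length := by
  have e1 : {x // P x} ≃ {x // x ∈ l} := Equiv.subtypeEquivRight h
  have hbij : Function.Bijective
      (fun i : Fin l.length => (⟨l.get i, List.get_mem l i⟩ : {x // x ∈ l})) := by
    constructor
    · intro i j hij
      exact (List.nodup_iff_injective_get.1 hl) (by simpa [Subtype.ext_iff] using hij)
    · rintro ⟨x, hx⟩
      obtain ⟨i, hi⟩ := List.get_of_mem hx
      exact ⟨i, Subtype.ext hi⟩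
  calc Nat.card {x // P x} = Nat.card {x // x ∈ l} := Nat.card_congr e1
    _ = Nat.card (Fin l.length) := (Nat.card_congr (Equiv.ofBijective _ hbij)).symm
    _ = l.length := by simp

end PairLists
section Ratio
open PlaneTree

def comb : ℕ → PlaneTree
  | 0 => .node []
  | n+1 => .node [comb n, .node [], .node []]

lemma comb_mem (n : ℕ) : comb n ∈ tern n := by
  induction n with
  | zero => rw [comb]; exact (mem_tern 0 _).2 ⟨IsTernary.leaf, by simp⟩
  | succ n ih =>
    rw [comb]
    obtain ⟨h1, h2⟩ := (mem_tern n _).1 ih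
    refine (mem_tern (n+1) _).2 ⟨IsTernary.node3 _ _ _ h1 IsTernary.leaf IsTernary.leaf, ?_⟩
    simp [h2]
    omega

lemma tern_pos (n : ℕ) : 0 < (tern n).length :=
  List.length_pos_iff.2 (fun he => by have := comb_mem n; rw [he] at this; simp at this)

/-- Abbreviation for the Fuss–Catalan numerator. -/
def fc (n : ℕ) : ℕ := (3*n+1).choose n

lemma fc_fact (n : ℕ) : fc n * n.factorial * (2*n+1).factorial = (3*n+1).factorial := by
  have h := Nat.choose_mul_factorial_mul_factorial (show n ≤ 3*n+1 by omega)
  rwa [show 3*n+1-n = 2*n+1 by omega] at h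

lemma c_ratio (n : ℕ) :
    (n+1) * ((2*n+2) * ((2*n+3) * fc (n+1))) = (3*n+2) * ((3*n+3) * ((3*n+4) * fc n)) := by
  have h1 := fc_fact n
  have h2 : fc (n+1) * (n+1).factorial * (2*n+3).factorial = (3*n+4).factorial := by
    have h := Nat.choose_mul_factorial_mul_factorial (show n+1 ≤ 3*n+4 by omega)
    rw [show 3*n+4-(n+1) = 2*n+3 by omega] at h
    have e : fc (n+1) = (3*n+4).choose (n+1) := by
      rw [fc, show 3*(n+1)+1 = 3*n+4 by omega]
    rw [e]
    exact h
  have e1 : (n+1).factorial = (n+1) * n.factorial := Nat.factorial_succ n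
  have e3 : (2*n+3).factorial = (2*n+3) * ((2*n+2) * (2*n+1).factorial) := by
    rw [show 2*n+3 = (2*n+2)+1 by omega, Nat.factorial_succ,
      show 2*n+2 = (2*n+1)+1 by omega, Nat.factorial_succ]
  have e2 : (3*n+4).factorial = (3*n+4) * ((3*n+3) * ((3*n+2) * (3*n+1).factorial)) := by
    rw [show 3*n+4 = (3*n+3)+1 by omega, Nat.factorial_succ,
      show 3*n+3 = (3*n+2)+1 by omega, Nat.factorial_succ,
      show 3*n+2 = (3*n+1)+1 by omega, Nat.factorial_succ]
  have key : ((n+1) * ((2*n+2) * ((2*n+3) * fc (n+1)))) * (n.factorial * (2*n+1).factorial)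
      = ((3*n+2) * ((3*n+3) * ((3*n+4) * fc n))) * (n.factorial * (2*n+1).factorial) := by
    calc ((n+1) * ((2*n+2) * ((2*n+3) * fc (n+1)))) * (n.factorial * (2*n+1).factorial)
        = fc (n+1) * ((n+1) * n.factorial) * ((2*n+3) * ((2*n+2) * (2*n+1).factorial)) := by
          ring
      _ = fc (n+1) * (n+1).factorial * (2*n+3).factorial := by rw [← e1, ← e3]
      _ = (3*n+4).factorial := h2
      _ = (3*n+4) * ((3*n+3) * ((3*n+2) * (3*n+1).factorial)) := e2
      _ = (3*n+4) * ((3*n+3) * ((3*n+2) * (fc n * n.factorial * (2*n+1).factorial))) := by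
          rw [h1]
      _ = ((3*n+2) * ((3*n+3) * ((3*n+4) * fc n))) * (n.factorial * (2*n+1).factorial) := by
          ring
  exact Nat.eq_of_mul_eq_mul_right (by positivity) key

end Ratio
section Analysis
open PlaneTree Filter

lemma htc (n : ℕ) : ((tern n).length : ℝ) * (3*n+1) = fc n := by
  have := tern_count n
  have h : (((tern n).length * (3*n+1) : ℕ) : ℝ) = ((fc n : ℕ) : ℝ) := by
    rw [this]; rfl
  push_cast at h
  convert h using 2 <;> push_cast <;> ring

lemma tpos (n : ℕ) : (0:ℝ) < (tern n).length := by
  exact_mod_cast tern_pos n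

lemma t_ratio_eq (m : ℕ) :
    ((tern m).length : ℝ) / ((tern (m+1)).length)
      = ((m+1)*(2*m+2)*(2*m+3)) / ((3*m+1)*(3*m+2)*(3*m+3)) := by
  have h0 := htc m
  have h1 := htc (m+1)
  push_cast at h1
  have hc : ((m:ℝ)+1) * ((2*m+2) * ((2*m+3) * (fc (m+1) : ℝ)))
      = (3*m+2) * ((3*m+3) * ((3*m+4) * (fc m : ℝ))) := by
    exact_mod_cast congrArg (fun x : ℕ => (x : ℝ)) (c_ratio m)
  have hb := tpos (m+1)
  have ha := tpos m
  rw [div_eq_div_iff (by positivity) (by positivity)]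
  have key : ((m:ℝ)+1)*(2*m+2)*(2*m+3) * (((tern (m+1)).length : ℝ) * (3*m+4))
      = (3*m+1)*((3*m+2)*(3*m+3)) * (((tern m).length : ℝ) * (3*m+4)) := by
    linear_combination ((m:ℝ)+1)*(2*m+2)*(2*m+3) * h1 + hc
      - ((3*(m:ℝ)+2)*(3*m+3)*(3*m+4)) * h0
  have h34 : ((3:ℝ)*m+4) ≠ 0 := by positivity
  nlinarith [key, h34, mul_pos hb (show (0:ℝ) < 3*m+4 by positivity)]

lemma tendsto_aux1 : Tendsto (fun m : ℕ => ((m:ℝ)+1)*(2*m+2)*(2*m+3) /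
    ((3*(m:ℝ)+1)*(3*m+2)*(3*m+3))) atTop (nhds (4/27)) := by
  have h0 : Tendsto (fun m : ℕ => 1/(m:ℝ)) atTop (nhds 0) :=
    tendsto_one_div_atTop_nhds_zero_nat
  have l1 : Tendsto (fun m : ℕ => 1 + 1/(m:ℝ)) atTop (nhds 1) := by
    simpa using tendsto_const_nhds.add h0
  have l2 : Tendsto (fun m : ℕ => 2 + 2*(1/(m:ℝ))) atTop (nhds 2) := by
    simpa using tendsto_const_nhds.add (h0.const_mul 2)
  have l3 : Tendsto (fun m : ℕ => 2 + 3*(1/(m:ℝ))) atTop (nhds 2) := by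
    simpa using tendsto_const_nhds.add (h0.const_mul 3)
  have l4 : Tendsto (fun m : ℕ => 3 + 1/(m:ℝ)) atTop (nhds 3) := by
    simpa using tendsto_const_nhds.add h0
  have l5 : Tendsto (fun m : ℕ => 3 + 2*(1/(m:ℝ))) atTop (nhds 3) := by
    simpa using tendsto_const_nhds.add (h0.const_mul 2)
  have l6 : Tendsto (fun m : ℕ => 3 + 3*(1/(m:ℝ))) atTop (nhds 3) := by
    simpa using tendsto_const_nhds.add (h0.const_mul 3)
  have hnum : Tendsto (fun m : ℕ => (1 + 1/(m:ℝ))*(2 + 2*(1/(m:ℝ)))*(2 + 3*(1/(m:ℝ))))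
      atTop (nhds 4) := by
    convert (l1.mul l2).mul l3 using 2
    norm_num
  have hden : Tendsto (fun m : ℕ => (3 + 1/(m:ℝ))*(3 + 2*(1/(m:ℝ)))*(3 + 3*(1/(m:ℝ))))
      atTop (nhds 27) := by
    convert (l4.mul l5).mul l6 using 2
    norm_num
  have := hnum.div hden (by norm_num)
  apply this.congr'
  filter_upwards [eventually_ge_atTop 1] with m hm
  have hm0 : (m:ℝ) ≠ 0 := by
    have : (1:ℝ) ≤ m := by exact_mod_cast hm
    positivity
  simp only [Pi.div_apply]
  field_simp

lemma R1 : Tendsto (fun m : ℕ => ((tern m).length : ℝ) / ((tern (m+1)).length))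
    atTop (nhds (4/27)) := by
  have := tendsto_aux1
  apply this.congr
  intro m
  rw [t_ratio_eq m]

lemma R2 (j : ℕ) : Tendsto (fun m : ℕ => ((tern m).length : ℝ) / ((tern (m+j)).length))
    atTop (nhds ((4/27)^j)) := by
  induction j with
  | zero =>
    simp only [Nat.add_zero, pow_zero]
    have : (fun m : ℕ => ((tern m).length : ℝ) / ((tern m).length)) = fun _ => 1 := by
      funext m
      exact div_self (ne_of_gt (tpos m))
    rw [this]
    exact tendsto_const_nhds
  | succ j ih =>
    have heq : ∀ m : ℕ, ((tern m).length : ℝ) / ((tern (m+(j+1))).length)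
        = (((tern m).length : ℝ) / ((tern (m+j)).length)) *
          (((tern (m+j)).length : ℝ) / ((tern (m+j+1)).length)) := by
      intro m
      rw [div_mul_div_comm]
      rw [mul_comm (((tern (m+j)).length : ℝ)) _]
      rw [mul_div_mul_right _ _ (ne_of_gt (tpos (m+j))), show m+(j+1) = m+j+1 by omega]
    have h2 : Tendsto (fun m : ℕ => ((tern (m+j)).length : ℝ) / ((tern (m+j+1)).length))
        atTop (nhds (4/27)) := (tendsto_add_atTop_iff_nat j).2 R1
    have := ih.mul h2
    rw [← pow_succ] at this
    exact this.congr (fun m => (heq m).symm)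

lemma R3 (k : ℕ) : Tendsto (fun m : ℕ => (2*(m:ℝ)+1)/((m:ℝ)+k)) atTop (nhds 2) := by
  have h0 : Tendsto (fun m : ℕ => 1/(m:ℝ)) atTop (nhds 0) :=
    tendsto_one_div_atTop_nhds_zero_nat
  have hnum : Tendsto (fun m : ℕ => 2 + 1/(m:ℝ)) atTop (nhds 2) := by
    simpa using tendsto_const_nhds.add h0
  have hden : Tendsto (fun m : ℕ => 1 + (k:ℝ)*(1/(m:ℝ))) atTop (nhds 1) := by
    simpa using tendsto_const_nhds.add (h0.const_mul (k:ℝ))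
  have := hnum.div hden (by norm_num)
  norm_num at this
  apply this.congr'
  filter_upwards [eventually_ge_atTop 1] with m hm
  have hm0 : (m:ℝ) ≠ 0 := by
    have : (1:ℝ) ≤ m := by exact_mod_cast hm
    positivity
  simp only [Pi.div_apply]
  field_simp

end Analysis

open PlaneTree


/-- For a uniformly random ternary tree with `3n+1` nodes together with a uniformly
random internal node `u`, the size of the fringe subtree rooted at `u` converges in
distribution, as `n → ∞`, to the law `P(K = 3k+1) = (2^{2k+1}/(3^{3k}(3k+1)))·C(3k+1,k)`
for `k ≥ 1`. -/
theorem fringe_subtree_size_limit (k : ℕ) (hk : 1 ≤ k) :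
    Tendsto (fun n : ℕ =>
      (Nat.card {p : PlaneTree × List ℕ //
          p.1.IsTernary ∧ p.1.size = 3 * n + 1 ∧
          ∃ ts, PlaneTree.subtreeAt p.2 p.1 = some (PlaneTree.node ts) ∧ ts ≠ [] ∧
            (PlaneTree.node ts).size = 3 * k + 1} : ℝ) /
      (Nat.card {p : PlaneTree × List ℕ //
          p.1.IsTernary ∧ p.1.size = 3 * n + 1 ∧
          ∃ ts, PlaneTree.subtreeAt p.2 p.1 = some (PlaneTree.node ts) ∧ ts ≠ []} : ℝ))
      atTop
      (nhds ((2 : ℝ) ^ (2 * k + 1) / (3 ^ (3 * k) * (3 * k + 1)) *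
        Nat.choose (3 * k + 1) k)) := by
    classical
  have hden : ∀ n : ℕ, (Nat.card {p : PlaneTree × List ℕ //
      p.1.IsTernary ∧ p.1.size = 3 * n + 1 ∧
      ∃ ts, PlaneTree.subtreeAt p.2 p.1 = some (PlaneTree.node ts) ∧ ts ≠ []})
      = (tern n).length * n := by
    intro n
    refine (nat_card_eq_length (DL n) (nodup_DL n) _ ?_).trans (length_DL n)
    intro p
    rw [mem_DL]
    constructor
    · rintro ⟨h1, h2, h3⟩
      refine ⟨h1, ?_, h3⟩
      rw [PlaneTree.size_eq_of_ternary h1] at h2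
      omega
    · rintro ⟨h1, h2, h3⟩
      refine ⟨h1, ?_, h3⟩
      rw [PlaneTree.size_eq_of_ternary h1, h2]
  have hnum : ∀ n : ℕ, k ≤ n → (Nat.card {p : PlaneTree × List ℕ //
      p.1.IsTernary ∧ p.1.size = 3 * n + 1 ∧
      ∃ ts, PlaneTree.subtreeAt p.2 p.1 = some (PlaneTree.node ts) ∧ ts ≠ [] ∧
        (PlaneTree.node ts).size = 3 * k + 1})
      = (tern (n-k)).length * ((2*(n-k)+1) * (tern k).length) := by
    intro n hkn
    refine (nat_card_eq_length (NL (n-k) k) (nodup_NL (n-k) k) _ ?_).trans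
      (length_NL (n-k) k)
    intro p
    rw [mem_NL]
    constructor
    · rintro ⟨h1, h2, ts, hts, htsne, htss⟩
      have hSt := PlaneTree.isTernary_subtreeAt h1 hts
      refine ⟨h1, ?_, PlaneTree.node ts, hts, ?_⟩
      · rw [PlaneTree.size_eq_of_ternary h1] at h2
        omega
      · rw [PlaneTree.size_eq_of_ternary hSt] at htss
        omega
    · rintro ⟨h1, h2, S, hS, hSk⟩
      have hSt := PlaneTree.isTernary_subtreeAt h1 hS
      refine ⟨h1, ?_, ?_⟩
      · rw [PlaneTree.size_eq_of_ternary h1, h2]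
        have : n - k + k = n := by omega
        rw [this]
      · cases hSt with
        | leaf =>
          exfalso
          rw [PlaneTree.numInternal_nil] at hSk
          omega
        | node3 x y z hx hy hz =>
          refine ⟨[x,y,z], hS, by simp, ?_⟩
          rw [PlaneTree.size_eq_of_ternary (PlaneTree.IsTernary.node3 x y z hx hy hz), hSk]
  have hkpos : (0:ℝ) < (k:ℝ) := by exact_mod_cast hk
  have hGlim : Tendsto (fun n : ℕ =>
      (((tern (n-k)).length * ((2*(n-k)+1) * (tern k).length) : ℕ) : ℝ) /
        (((tern n).length * n : ℕ) : ℝ)) atTop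
      (nhds (((tern k).length : ℝ) * 2 * ((4:ℝ)/27)^k)) := by
    rw [← tendsto_add_atTop_iff_nat k]
    have hlim2 : Tendsto (fun m : ℕ => ((tern k).length : ℝ) *
        ((2*(m:ℝ)+1)/((m:ℝ)+k)) * (((tern m).length : ℝ) / ((tern (m+k)).length : ℝ)))
        atTop (nhds (((tern k).length : ℝ) * 2 * ((4:ℝ)/27)^k)) :=
      (tendsto_const_nhds.mul (R3 k)).mul (R2 k)
    apply hlim2.congr
    intro m
    have e : (m+k)-k = m := by omega
    rw [e]
    push_cast
    have h1 : ((tern (m+k)).length : ℝ) ≠ 0 := ne_of_gt (tpos _)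
    have h2 : ((m:ℝ)+k) ≠ 0 := by positivity
    field_simp
  have hconst : ((tern k).length : ℝ) * 2 * ((4:ℝ)/27)^k
      = (2 : ℝ) ^ (2 * k + 1) / (3 ^ (3 * k) * (3 * k + 1)) *
        Nat.choose (3 * k + 1) k := by
    have h := htc k
    have e4 : ((4:ℝ)/27)^k = 2^(2*k) / 3^(3*k) := by
      rw [div_pow, show (4:ℝ) = 2^2 by norm_num, show (27:ℝ) = 3^3 by norm_num,
        ← pow_mul, ← pow_mul]
    have hfc : ((Nat.choose (3*k+1) k : ℕ) : ℝ) = (fc k : ℝ) := rfl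
    rw [e4, hfc, ← h]
    have h3 : ((3:ℝ))^(3*k) ≠ 0 := by positivity
    have h31 : ((3:ℝ)*k+1) ≠ 0 := by positivity
    field_simp
    ring
  rw [hconst] at hGlim
  apply hGlim.congr'
  filter_upwards [eventually_ge_atTop k] with n hn
  rw [hden n, hnum n hn]
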